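/- Let $\Pl$ be an Archimedean plausibility measure on a locally finite test space $(X,\Sigma)$, let $V$ be the $\mathbb{Q}$-vector space with basis $\{e_x\}_{x\in X}$, let $e_A = \sum_{x\in A} e_x$ for events $A$, and let $C$ be the convex cone generated by $\{e_A - e_B : \Pl(A) \succeq \Pl(B)\}$. Then for any fixed test $T$, the element $u = e_T$ satisfies: for every $a \in V$ there exists $\lambda \in \mathbb{Q}$ with $\lambda u + a \in C$. -/

import Mathlib

open Finset

/-- A (locally finite) test space: a set of finite tests covering the outcome set. -/
structure TSpace (X : Type*) where
  tests : Set (Finset X)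
  covers : ∀ x : X, ∃ T ∈ tests, x ∈ T

/-- An event is a subset of some test. -/
def TSpace.IsEvent {X : Type*} (S : TSpace X) (A : Finset X) : Prop :=
  ∃ T ∈ S.tests, A ⊆ T

/-- A probability measure on a test space. -/
def IsProbMeasure {X : Type*} (S : TSpace X) (μ : X → ℝ) : Prop :=
  (∀ x, 0 ≤ μ x) ∧ ∀ T ∈ S.tests, ∑ x ∈ T, μ x = 1

/-- Extension of a probability measure to events. -/
def mval {X : Type*} (μ : X → ℝ) (A : Finset X) : ℝ := ∑ x ∈ A, μ x

/-- A plausibility measure on a test space, valued in a poset `D`. -/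
structure PlausMeasure {X : Type*} (S : TSpace X) (D : Type*) [PartialOrder D] where
  Pl : Finset X → D
  eq_tests : ∀ T ∈ S.tests, ∀ R ∈ S.tests, Pl T = Pl R
  mono : ∀ A B : Finset X, S.IsEvent B → A ⊆ B → Pl A ≤ Pl B
  pos : ∀ T ∈ S.tests, Pl ∅ < Pl T

open scoped Classical in
/-- The Archimedean condition for a plausibility assignment. -/
def IsArch {X D : Type*} [PartialOrder D] (S : TSpace X) (Pl : Finset X → D) : Prop :=
  ∀ (n : ℕ) (A B : Fin (n + 1) → Finset X),
    (∀ i, S.IsEvent (A i)) → (∀ i, S.IsEvent (B i)) →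
    (∀ x : X, (univ.filter fun i => x ∈ A i).card = (univ.filter fun i => x ∈ B i).card) →
    (∀ i : Fin n, Pl (A i.castSucc) ≤ Pl (B i.castSucc)) →
    Pl (B (Fin.last n)) ≤ Pl (A (Fin.last n))
/-- The convex cone generated by a set `S`: all finite nonnegative rational
linear combinations of elements of `S`. -/
def coneGen {V : Type*} [AddCommGroup V] [Module ℚ V] (S : Set V) : Set V :=
  {v | ∃ (n : ℕ) (c : Fin n → ℚ) (s : Fin n → V),
    (∀ i, 0 ≤ c i) ∧ (∀ i, s i ∈ S) ∧ v = ∑ i, c i • s i}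


lemma coneGen_zero {V : Type*} [AddCommGroup V] [Module ℚ V] (S : Set V) :
    (0 : V) ∈ coneGen S :=
  ⟨0, ![], ![], fun i => i.elim0, fun i => i.elim0, by simp⟩

lemma coneGen_smul_mem {V : Type*} [AddCommGroup V] [Module ℚ V] {S : Set V}
    {c : ℚ} (hc : 0 ≤ c) {s : V} (hs : s ∈ S) : c • s ∈ coneGen S :=
  ⟨1, ![c], ![s], fun i => by fin_cases i; simpa, fun i => by fin_cases i; simpa,
    by simp⟩

lemma coneGen_add {V : Type*} [AddCommGroup V] [Module ℚ V] {S : Set V}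
    {v w : V} (hv : v ∈ coneGen S) (hw : w ∈ coneGen S) : v + w ∈ coneGen S := by
  obtain ⟨n, c, s, hc, hs, rfl⟩ := hv
  obtain ⟨m, d, t, hd, ht, rfl⟩ := hw
  refine ⟨n + m, Fin.append c d, Fin.append s t, fun i => ?_, fun i => ?_, ?_⟩
  · exact Fin.addCases (motive := fun i => 0 ≤ Fin.append c d i)
      (fun j => by simpa using hc j)
      (fun j => by simpa using hd j) i
  · exact Fin.addCases (motive := fun i => Fin.append s t i ∈ S)
      (fun j => by simpa using hs j)
      (fun j => by simpa using ht j) i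
  · rw [Fin.sum_univ_add]
    simp [Fin.append_left, Fin.append_right]

/-- The basis vector sum `e_A = ∑_{x ∈ A} e_x` in the free `ℚ`-vector space on `X`. -/
noncomputable def eVec {X : Type*} (A : Finset X) : X →₀ ℚ :=
  ∑ x ∈ A, Finsupp.single x 1


/-- For an Archimedean plausibility measure, `u = e_T` is an order unit for the cone
generated by the differences `e_A - e_B` with `Pl(A) ⪰ Pl(B)`. -/
theorem stmt10 {X D : Type*} [PartialOrder D] (S : TSpace X) (P : PlausMeasure S D)
    (hArch : IsArch S P.Pl) (T : Finset X) (hT : T ∈ S.tests) :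
    ∀ a : X →₀ ℚ, ∃ l : ℚ,
      l • eVec T + a ∈ coneGen {v | ∃ A B : Finset X, S.IsEvent A ∧ S.IsEvent B ∧
        P.Pl B ≤ P.Pl A ∧ v = eVec A - eVec B} := by
  have hx_mem : ∀ x : X, eVec {x} ∈ {v | ∃ A B : Finset X, S.IsEvent A ∧ S.IsEvent B ∧
      P.Pl B ≤ P.Pl A ∧ v = eVec A - eVec B} := by
    intro x
    obtain ⟨T', hT', hxT'⟩ := S.covers x
    exact ⟨{x}, ∅, ⟨T', hT', by simpa⟩, ⟨T, hT, by simp⟩,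
      P.mono ∅ {x} ⟨T', hT', by simpa⟩ (by simp), by simp [eVec]⟩
  have hTx_mem : ∀ x : X, eVec T - eVec {x} ∈ {v | ∃ A B : Finset X, S.IsEvent A ∧ S.IsEvent B ∧
      P.Pl B ≤ P.Pl A ∧ v = eVec A - eVec B} := by
    intro x
    obtain ⟨T', hT', hxT'⟩ := S.covers x
    refine ⟨T, {x}, ⟨T, hT, subset_rfl⟩, ⟨T', hT', by simpa⟩, ?_, rfl⟩
    calc P.Pl {x} ≤ P.Pl T' := P.mono {x} T' ⟨T', hT', subset_rfl⟩ (by simpa)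
      _ = P.Pl T := P.eq_tests T' hT' T hT
  intro a
  induction a using Finsupp.induction with
  | zero => exact ⟨0, by simpa using coneGen_zero _⟩
  | single_add x c f _ _ ih =>
    obtain ⟨l, hl⟩ := ih
    have hsingle : Finsupp.single x c = c • eVec {x} := by
      simp [eVec, Finsupp.smul_single]
    rcases le_or_gt 0 c with h | h
    · refine ⟨l, ?_⟩
      have := coneGen_add (coneGen_smul_mem h (hx_mem x)) hl
      rw [← hsingle] at this
      convert this using 1
      abel
    · refine ⟨l - c, ?_⟩
      have := coneGen_add (coneGen_smul_mem (by linarith : (0:ℚ) ≤ -c) (hTx_mem x)) hl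
      convert this using 1
      rw [smul_sub, hsingle]
      module
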